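/- Negative result for the supremum-based sigmoid loss: Suppose the zero function belongs to H and H is regular for adversarial calibration, i.e., there exist x₀∈X and f,g∈H with inf_{x':‖x₀−x'‖_p≤γ} f(x') > 0 and sup_{x':‖x₀−x'‖_p≤γ} g(x') < 0. Let k>0, let Φ_sig(t)=1−tanh(k·t), and let Φ̃_sig be its supremum-based loss. If f:[0,∞)→[0,∞) is non-decreasing and satisfies, for every distribution D over X×Y and every h∈H, R_{ℓ_γ}(h) − R*_{ℓ_γ,H} ≤ f(R_{Φ̃_sig}(h) − R*_{Φ̃_sig,H}), then f(t) ≥ 1/2 for every t ≥ 0. -/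
import Mathlib


open MeasureTheory Set
open scoped ENNReal

noncomputable section

/-- Conditional `ℓ`-risk of `h` at `x` with conditional probability level `t`. -/
def condRiskT {X : Type*} (ℓ : (X → ℝ) → X → ℝ → ℝ) (h : X → ℝ) (x : X) (t : ℝ) : ℝ :=
  t * ℓ h x 1 + (1 - t) * ℓ h x (-1)

/-- Conditional `ℓ`-risk of `h` at `x`. -/
def condRisk {X : Type*} (ℓ : (X → ℝ) → X → ℝ → ℝ) (η : X → ℝ) (h : X → ℝ) (x : X) : ℝ :=
  condRiskT ℓ h x (η x)

/-- Minimal conditional `ℓ`-risk over the hypothesis set `H` at `x`. -/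
def condRiskStar {X : Type*} (ℓ : (X → ℝ) → X → ℝ → ℝ) (η : X → ℝ) (H : Set (X → ℝ))
    (x : X) : ℝ :=
  sInf ((fun h => condRisk ℓ η h x) '' H)

/-- `ΔC_{ℓ,H}(h,x)`. -/
def deltaC {X : Type*} (ℓ : (X → ℝ) → X → ℝ → ℝ) (η : X → ℝ) (H : Set (X → ℝ))
    (h : X → ℝ) (x : X) : ℝ :=
  condRisk ℓ η h x - condRiskStar ℓ η H x

/-- `ΔC_{ℓ,H}(h,x,t)`. -/
def deltaCT {X : Type*} (ℓ : (X → ℝ) → X → ℝ → ℝ) (H : Set (X → ℝ))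
    (h : X → ℝ) (x : X) (t : ℝ) : ℝ :=
  condRiskT ℓ h x t - sInf ((fun h' => condRiskT ℓ h' x t) '' H)

/-- Generalization error `R_ℓ(h)` with respect to the input-space set `XS`. -/
def genErrS {X : Type*} [MeasurableSpace X] (μ : Measure X) (XS : Set X)
    (ℓ : (X → ℝ) → X → ℝ → ℝ) (η : X → ℝ) (h : X → ℝ) : ℝ :=
  ∫ x in XS, condRisk ℓ η h x ∂μ

/-- Best-in-class error `R*_{ℓ,H}`. -/
def bestErrS {X : Type*} [MeasurableSpace X] (μ : Measure X) (XS : Set X)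
    (ℓ : (X → ℝ) → X → ℝ → ℝ) (η : X → ℝ) (H : Set (X → ℝ)) : ℝ :=
  sInf ((fun h => genErrS μ XS ℓ η h) '' H)

/-- Minimizability gap `M_{ℓ,H}`. -/
def minGapS {X : Type*} [MeasurableSpace X] (μ : Measure X) (XS : Set X)
    (ℓ : (X → ℝ) → X → ℝ → ℝ) (η : X → ℝ) (H : Set (X → ℝ)) : ℝ :=
  bestErrS μ XS ℓ η H - ∫ x in XS, condRiskStar ℓ η H x ∂μ

/-- `ε`-truncation `⟨t⟩_ε = t · 1_{t > ε}`. -/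
def trunc (ε t : ℝ) : ℝ := if ε < t then t else 0

/-- `u_h(x) = inf_{‖x−x'‖ ≤ γ} h(x')`. -/
def uInf {E : Type*} [NormedAddCommGroup E] (γ : ℝ) (h : E → ℝ) (x : E) : ℝ :=
  sInf (h '' {x' | ‖x - x'‖ ≤ γ})

/-- `o_h(x) = sup_{‖x−x'‖ ≤ γ} h(x')`. -/
def oSup {E : Type*} [NormedAddCommGroup E] (γ : ℝ) (h : E → ℝ) (x : E) : ℝ :=
  sSup (h '' {x' | ‖x - x'‖ ≤ γ})

/-- The adversarial zero-one loss `ℓ_γ(h,x,y) = sup_{‖x−x'‖ ≤ γ} 1_{y·h(x') ≤ 0}`. -/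
def lossGamma {E : Type*} [NormedAddCommGroup E] (γ : ℝ) (h : E → ℝ) (x : E) (y : ℝ) : ℝ :=
  sSup ((fun x' => if y * h x' ≤ 0 then (1:ℝ) else 0) '' {x' | ‖x - x'‖ ≤ γ})

/-- The supremum-based loss `Φ̃(h,x,y) = sup_{‖x−x'‖ ≤ γ} Φ(y·h(x'))`. -/
def supLoss {E : Type*} [NormedAddCommGroup E] (γ : ℝ) (Φ : ℝ → ℝ)
    (h : E → ℝ) (x : E) (y : ℝ) : ℝ :=
  sSup ((fun x' => Φ (y * h x')) '' {x' | ‖x - x'‖ ≤ γ})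

/-- `H̄_γ(x) = {h ∈ H : u_h(x) ≤ 0 ≤ o_h(x)}`. -/
def Hbar {E : Type*} [NormedAddCommGroup E] (γ : ℝ) (H : Set (E → ℝ)) (x : E) :
    Set (E → ℝ) :=
  {h ∈ H | uInf γ h x ≤ 0 ∧ 0 ≤ oSup γ h x}

/-- A hypothesis set is symmetric when it is closed under negation. -/
def IsSymmetricHyp {E : Type*} (H : Set (E → ℝ)) : Prop :=
  ∀ h : E → ℝ, h ∈ H ↔ (fun x => -(h x)) ∈ H

end

section myaux
open Set

variable {E : Type*} [NormedAddCommGroup E] {γ : ℝ}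

lemma my_mem_ball_self (hγ : 0 ≤ γ) (x : E) : x ∈ {x' : E | ‖x - x'‖ ≤ γ} := by
  simp [hγ]

lemma my_neg_one_lt_tanh (x : ℝ) : -1 < Real.tanh x := by
  rw [Real.tanh_eq_sinh_div_cosh]
  have hc : 0 < Real.cosh x := Real.cosh_pos x
  rw [lt_div_iff₀ hc]
  have := Real.cosh_add_sinh x
  nlinarith [Real.exp_pos x]

lemma my_sSup_const (hγ : 0 ≤ γ) (x : E) {v : E → ℝ} {c : ℝ}
    (hv : ∀ x' ∈ {x' : E | ‖x - x'‖ ≤ γ}, v x' = c) :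
    sSup (v '' {x' | ‖x - x'‖ ≤ γ}) = c := by
  have himg : v '' {x' | ‖x - x'‖ ≤ γ} = {c} := by
    apply Subset.antisymm
    · rintro _ ⟨x', hx', rfl⟩; exact hv x' hx'
    · rintro _ rfl; exact ⟨x, my_mem_ball_self hγ x, hv x (my_mem_ball_self hγ x)⟩
  rw [himg, csSup_singleton]

lemma my_bddAbove {v : E → ℝ} {c : ℝ} (x : E) (hv : ∀ x', v x' ≤ c) :
    BddAbove (v '' {x' : E | ‖x - x'‖ ≤ γ}) := by
  refine ⟨c, ?_⟩; rintro _ ⟨x', _, rfl⟩; exact hv x'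

/-- ℓ_γ(0,x,y) = 1 when y*0 ≤ 0 (always). -/
lemma my_lossGamma_zero (hγ : 0 ≤ γ) (x : E) (y : ℝ) :
    lossGamma γ (fun _ => (0:ℝ)) x y = 1 := by
  apply my_sSup_const hγ x
  intro x' _; simp

lemma my_lossGamma_nonneg (hγ : 0 ≤ γ) (h : E → ℝ) (x : E) (y : ℝ) :
    0 ≤ lossGamma γ h x y := by
  have hba : BddAbove ((fun x' => if y * h x' ≤ 0 then (1:ℝ) else 0) '' {x' | ‖x - x'‖ ≤ γ}) :=
    my_bddAbove (c := 1) x (fun x' => by split <;> norm_num)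
  have hle : (if y * h x ≤ 0 then (1:ℝ) else 0) ≤ lossGamma γ h x y :=
    le_csSup hba ⟨x, my_mem_ball_self hγ x, rfl⟩
  split at hle <;> linarith

lemma my_lossGamma_sum (hγ : 0 ≤ γ) (h : E → ℝ) (x : E) :
    1 ≤ lossGamma γ h x 1 + lossGamma γ h x (-1) := by
  by_cases hex : ∃ x' ∈ {x' : E | ‖x - x'‖ ≤ γ}, h x' ≤ 0
  · obtain ⟨x', hx', hle⟩ := hex
    have h1 : (1:ℝ) ≤ lossGamma γ h x 1 := by
      have hba : BddAbove ((fun x' => if (1:ℝ) * h x' ≤ 0 then (1:ℝ) else 0) '' {x' | ‖x - x'‖ ≤ γ}) :=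
        my_bddAbove (c := 1) x (fun x' => by split <;> norm_num)
      refine le_trans ?_ (le_csSup hba ⟨x', hx', rfl⟩)
      have hc : (1:ℝ) * h x' ≤ 0 := by linarith
      simp only [if_pos hc]
      exact le_refl 1
    have h2 := my_lossGamma_nonneg hγ h x (-1)
    linarith
  · push_neg at hex
    have hx := hex x (my_mem_ball_self hγ x)
    have h2 : (1:ℝ) ≤ lossGamma γ h x (-1) := by
      have hba : BddAbove ((fun x' => if (-1:ℝ) * h x' ≤ 0 then (1:ℝ) else 0) '' {x' | ‖x - x'‖ ≤ γ}) :=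
        my_bddAbove (c := 1) x (fun x' => by split <;> norm_num)
      refine le_trans ?_ (le_csSup hba ⟨x, my_mem_ball_self hγ x, rfl⟩)
      have hcond : (-1:ℝ) * h x ≤ 0 := by nlinarith
      simp only [if_pos hcond]
      exact le_refl 1
    have h1 := my_lossGamma_nonneg hγ h x 1
    linarith

/-- if `uInf γ f₀ x > 0` then ℓ_γ(f₀,x,1) = 0 and ℓ_γ(f₀,x,-1) = 1. -/
lemma my_uInf_pos_lt {f₀ : E → ℝ} {x : E} (hf : 0 < uInf γ f₀ x)
    {x' : E} (hx' : x' ∈ {x' : E | ‖x - x'‖ ≤ γ}) : 0 < f₀ x' := by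
  have hbb : BddBelow (f₀ '' {x' : E | ‖x - x'‖ ≤ γ}) := by
    by_contra hnb
    rw [uInf, Real.sInf_of_not_bddBelow hnb] at hf
    exact lt_irrefl 0 hf
  have := csInf_le hbb ⟨x', hx', rfl⟩
  calc (0:ℝ) < uInf γ f₀ x := hf
    _ ≤ f₀ x' := this

lemma my_lossGamma_f0_pos (hγ : 0 ≤ γ) {f₀ : E → ℝ} {x : E} (hf : 0 < uInf γ f₀ x) :
    lossGamma γ f₀ x 1 = 0 := by
  apply my_sSup_const hγ x
  intro x' hx'
  have h1 := my_uInf_pos_lt hf hx'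
  have h2 : ¬ ((1:ℝ) * f₀ x' ≤ 0) := by nlinarith
  rw [if_neg h2]

lemma my_lossGamma_f0_neg (hγ : 0 ≤ γ) {f₀ : E → ℝ} {x : E} (hf : 0 < uInf γ f₀ x) :
    lossGamma γ f₀ x (-1) = 1 := by
  apply my_sSup_const hγ x
  intro x' hx'
  have h1 := my_uInf_pos_lt hf hx'
  have h2 : (-1:ℝ) * f₀ x' ≤ 0 := by nlinarith
  rw [if_pos h2]

/-- supLoss of sigmoid for fixed k, bound by 2. -/
lemma my_sig_le_two (k t : ℝ) : 1 - Real.tanh (k * t) ≤ 2 := by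
  have := my_neg_one_lt_tanh (k * t); linarith

lemma my_supLoss_zero (hγ : 0 ≤ γ) (k : ℝ) (x : E) (y : ℝ) :
    supLoss γ (fun t => 1 - Real.tanh (k * t)) (fun _ => (0:ℝ)) x y = 1 := by
  apply my_sSup_const hγ x
  intro x' _
  simp [Real.tanh_zero]

lemma my_supLoss_sum (hγ : 0 ≤ γ) (k : ℝ) (h : E → ℝ) (x : E) :
    2 ≤ supLoss γ (fun t => 1 - Real.tanh (k * t)) h x 1
        + supLoss γ (fun t => 1 - Real.tanh (k * t)) h x (-1) := by
  have hba1 : BddAbove ((fun x' => 1 - Real.tanh (k * ((1:ℝ) * h x'))) '' {x' | ‖x - x'‖ ≤ γ}) :=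
    my_bddAbove x (fun x' => my_sig_le_two k _)
  have hba2 : BddAbove ((fun x' => 1 - Real.tanh (k * ((-1:ℝ) * h x'))) '' {x' | ‖x - x'‖ ≤ γ}) :=
    my_bddAbove x (fun x' => my_sig_le_two k _)
  have h1 : 1 - Real.tanh (k * ((1:ℝ) * h x)) ≤ supLoss γ (fun t => 1 - Real.tanh (k * t)) h x 1 :=
    le_csSup hba1 ⟨x, my_mem_ball_self hγ x, rfl⟩
  have h2 : 1 - Real.tanh (k * ((-1:ℝ) * h x)) ≤ supLoss γ (fun t => 1 - Real.tanh (k * t)) h x (-1) :=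
    le_csSup hba2 ⟨x, my_mem_ball_self hγ x, rfl⟩
  have hodd : Real.tanh (k * ((-1:ℝ) * h x)) = - Real.tanh (k * ((1:ℝ) * h x)) := by
    rw [show k * ((-1:ℝ) * h x) = -(k * ((1:ℝ) * h x)) by ring, Real.tanh_neg]
  rw [hodd] at h2
  linarith

end myaux

open MeasureTheory Set in
/-- **Negative result for the supremum-based sigmoid loss** (Theorem 5, sigmoid case). -/
theorem negative_result_sup_sigmoid
    {d : ℕ} {p : ℝ≥0∞} [Fact (1 ≤ p)]
    [MeasurableSpace (PiLp p (fun _ : Fin d => ℝ))]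
    [BorelSpace (PiLp p (fun _ : Fin d => ℝ))]
    (γ : ℝ) (hγ : 0 < γ)
    (XS : Set (PiLp p (fun _ : Fin d => ℝ))) (hXSne : XS.Nonempty)
    (hXSmeas : MeasurableSet XS)
    (H : Set (PiLp p (fun _ : Fin d => ℝ) → ℝ)) (hHne : H.Nonempty)
    (hHmeas : ∀ h ∈ H, Measurable h)
    (hzero : (fun _ => (0:ℝ)) ∈ H)
    (hregular : ∃ x₀ ∈ XS, ∃ f₀ ∈ H, ∃ g₀ ∈ H, 0 < uInf γ f₀ x₀ ∧ oSup γ g₀ x₀ < 0)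
    (k : ℝ) (hk : 0 < k)
    (f : ℝ → ℝ) (hfpos : ∀ t, 0 ≤ t → 0 ≤ f t) (hfmono : MonotoneOn f (Ici (0:ℝ)))
    (hbound : ∀ μ : Measure (PiLp p (fun _ : Fin d => ℝ)), IsProbabilityMeasure μ →
      μ XS = 1 →
      ∀ η : PiLp p (fun _ : Fin d => ℝ) → ℝ, Measurable η → (∀ x, η x ∈ Icc (0:ℝ) 1) →
      ∀ h ∈ H,
        genErrS μ XS (lossGamma γ) η h - bestErrS μ XS (lossGamma γ) η H
          ≤ f (genErrS μ XS (supLoss γ (fun t => 1 - Real.tanh (k * t))) η h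
              - bestErrS μ XS (supLoss γ (fun t => 1 - Real.tanh (k * t))) η H)) :
    ∀ t : ℝ, 0 ≤ t → 1/2 ≤ f t := by
  classical
  obtain ⟨x₀, hx₀, f₀, hf₀H, g₀, hg₀H, hf₀, hg₀⟩ := hregular
  have hγ' : (0:ℝ) ≤ γ := hγ.le
  set μ : Measure (PiLp p (fun _ : Fin d => ℝ)) := Measure.dirac x₀ with hμ
  have hprob : IsProbabilityMeasure μ := Measure.dirac.isProbabilityMeasure
  have hμXS : μ XS = 1 := by
    rw [hμ, Measure.dirac_apply' _ hXSmeas]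
    simp [hx₀]
  set η : PiLp p (fun _ : Fin d => ℝ) → ℝ := fun _ => 1/2 with hη
  have hηIcc : ∀ x, η x ∈ Icc (0:ℝ) 1 := fun x => by norm_num [hη]
  have hgen : ∀ (ℓ : (PiLp p (fun _ : Fin d => ℝ) → ℝ) → PiLp p (fun _ : Fin d => ℝ) → ℝ → ℝ)
      (h : PiLp p (fun _ : Fin d => ℝ) → ℝ),
      genErrS μ XS ℓ η h = 1/2 * ℓ h x₀ 1 + 1/2 * ℓ h x₀ (-1) := by
    intro ℓ h
    rw [genErrS, hμ, setIntegral_dirac, if_pos hx₀]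
    show condRiskT ℓ h x₀ (η x₀) = _
    have : η x₀ = 1/2 := rfl
    rw [condRiskT, this]
    ring
  -- adversarial 0-1 loss computations
  have hA : genErrS μ XS (lossGamma γ) η (fun _ => (0:ℝ)) = 1 := by
    rw [hgen, my_lossGamma_zero hγ', my_lossGamma_zero hγ']; norm_num
  have hB : bestErrS μ XS (lossGamma γ) η H = 1/2 := by
    have hlow : ∀ r ∈ (fun h => genErrS μ XS (lossGamma γ) η h) '' H, (1:ℝ)/2 ≤ r := by
      rintro _ ⟨h, hh, rfl⟩
      beta_reduce
      rw [hgen]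
      have := my_lossGamma_sum hγ' h x₀
      linarith
    apply le_antisymm
    · apply csInf_le ⟨1/2, hlow⟩
      refine ⟨f₀, hf₀H, ?_⟩
      beta_reduce
      rw [hgen, my_lossGamma_f0_pos hγ' hf₀, my_lossGamma_f0_neg hγ' hf₀]
      norm_num
    · exact le_csInf (hHne.image _) hlow
  -- sigmoid sup loss computations
  have hC : genErrS μ XS (supLoss γ (fun t => 1 - Real.tanh (k * t))) η (fun _ => (0:ℝ)) = 1 := by
    rw [hgen, my_supLoss_zero hγ' k, my_supLoss_zero hγ' k]; norm_num
  have hD : bestErrS μ XS (supLoss γ (fun t => 1 - Real.tanh (k * t))) η H = 1 := by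
    have hlow : ∀ r ∈ (fun h => genErrS μ XS (supLoss γ (fun t => 1 - Real.tanh (k * t))) η h) '' H,
        (1:ℝ) ≤ r := by
      rintro _ ⟨h, hh, rfl⟩
      beta_reduce
      rw [hgen]
      have := my_supLoss_sum hγ' k h x₀
      linarith
    apply le_antisymm
    · apply csInf_le ⟨1, hlow⟩
      exact ⟨(fun _ => (0:ℝ)), hzero, hC⟩
    · exact le_csInf (hHne.image _) hlow
  have key := hbound μ hprob hμXS η measurable_const hηIcc (fun _ => (0:ℝ)) hzero
  rw [hA, hB, hC, hD] at key
  norm_num at key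
  intro t ht
  calc (1:ℝ)/2 ≤ f 0 := key
    _ ≤ f t := hfmono self_mem_Ici ht ht
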